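/- For fixed r ∈ ℝ and t ∈ [0,1), the function v_r(t,·) defined by v_r(t,z) = r + √(2π(1-t))(1-β²) exp((z-r)²/(2(1-t))) Φ((z-r)/√(1-t)) for z < r + β√(1-t), and v_r(t,z) = z for z ≥ r + β√(1-t), is continuous on ℝ, and moreover v_r(t,z) ≥ z for all z ∈ ℝ. -/

import Mathlib

open Real Set

/-- The standard normal cumulative distribution function. -/
noncomputable def Phi (x : ℝ) : ℝ :=
  (Real.sqrt (2 * Real.pi))⁻¹ * ∫ u in Set.Iic x, Real.exp (-u ^ 2 / 2)

/-- The value function for optimally stopping a Brownian bridge with known pinning point `r`. -/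
noncomputable def vr (β r t z : ℝ) : ℝ :=
  if z < r + β * Real.sqrt (1 - t) then
    r + Real.sqrt (2 * Real.pi * (1 - t)) * (1 - β ^ 2) *
      Real.exp ((z - r) ^ 2 / (2 * (1 - t))) * Phi ((z - r) / Real.sqrt (1 - t))
  else z

open MeasureTheory in
lemma gauss_integrable : Integrable (fun u : ℝ => Real.exp (-u ^ 2 / 2)) := by
  have := integrable_exp_neg_mul_sq (by norm_num : (0:ℝ) < 1/2)
  convert this using 2 with u
  ring_nf

lemma gauss_cont : Continuous (fun u : ℝ => Real.exp (-u ^ 2 / 2)) := by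
  continuity

lemma Phi_eq (x : ℝ) : Phi x = (Real.sqrt (2 * Real.pi))⁻¹ *
    ((∫ u in Set.Iic (0:ℝ), Real.exp (-u ^ 2 / 2)) + ∫ u in (0:ℝ)..x, Real.exp (-u ^ 2 / 2)) := by
  rw [Phi]
  congr 1
  rw [intervalIntegral.integral_Iic_sub_Iic (gauss_integrable.integrableOn)
    (gauss_integrable.integrableOn) |>.symm]
  ring

lemma hasDerivAt_Phi (x : ℝ) :
    HasDerivAt Phi ((Real.sqrt (2 * Real.pi))⁻¹ * Real.exp (-x ^ 2 / 2)) x := by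
  have h := (gauss_cont.integral_hasStrictDerivAt 0 x).hasDerivAt
  have h2 : HasDerivAt (fun y => (Real.sqrt (2 * Real.pi))⁻¹ *
      ((∫ u in Set.Iic (0:ℝ), Real.exp (-u ^ 2 / 2)) + ∫ u in (0:ℝ)..y, Real.exp (-u ^ 2 / 2)))
      ((Real.sqrt (2 * Real.pi))⁻¹ * Real.exp (-x ^ 2 / 2)) x := by
    exact ((h.const_add _).const_mul _)
  exact h2.congr_of_eventuallyEq (Filter.Eventually.of_forall fun y => Phi_eq y)

open MeasureTheory in
lemma Phi_pos (x : ℝ) : 0 < Phi x := by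
  have hs : 0 < Real.sqrt (2 * Real.pi) := Real.sqrt_pos.2 (by positivity)
  apply mul_pos (inv_pos.2 hs)
  rw [setIntegral_pos_iff_support_of_nonneg_ae]
  · have : Function.support (fun u : ℝ => Real.exp (-u ^ 2 / 2)) = Set.univ := by
      ext u; simp [Real.exp_ne_zero]
    rw [this, Set.univ_inter]
    simp [Real.volume_Iic]
  · exact Filter.Eventually.of_forall fun u => (Real.exp_pos _).le
  · exact gauss_integrable.integrableOn

noncomputable def gfun (β x : ℝ) : ℝ :=
  Real.sqrt (2 * Real.pi) * (1 - β ^ 2) * Real.exp (x ^ 2 / 2) * Phi x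

lemma hasDerivAt_gfun (β x : ℝ) :
    HasDerivAt (gfun β) (x * gfun β x + (1 - β ^ 2)) x := by
  have hsq : Real.sqrt (2 * Real.pi) ≠ 0 := by positivity
  have he : HasDerivAt (fun y : ℝ => Real.exp (y ^ 2 / 2)) (x * Real.exp (x ^ 2 / 2)) x := by
    have h1 : HasDerivAt (fun y : ℝ => y ^ 2 / 2) x x := by
      have := (hasDerivAt_pow 2 x).div_const 2
      simpa using this
    simpa [mul_comm] using h1.exp
  have h := (he.mul (hasDerivAt_Phi x)).const_mul (Real.sqrt (2 * Real.pi) * (1 - β ^ 2))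
  have heq : Real.sqrt (2 * Real.pi) * (1 - β ^ 2) *
      (x * Real.exp (x ^ 2 / 2) * Phi x +
        Real.exp (x ^ 2 / 2) * ((Real.sqrt (2 * Real.pi))⁻¹ * Real.exp (-x ^ 2 / 2)))
      = x * gfun β x + (1 - β ^ 2) := by
    have hexp : Real.exp (x ^ 2 / 2) * Real.exp (-x ^ 2 / 2) = 1 := by
      rw [← Real.exp_add]; ring_nf; exact Real.exp_zero
    have h1 : Real.sqrt (2 * Real.pi) * (Real.sqrt (2 * Real.pi))⁻¹ = 1 := mul_inv_cancel₀ hsq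
    rw [gfun]
    rw [show Real.sqrt (2 * Real.pi) * (1 - β ^ 2) *
      (x * Real.exp (x ^ 2 / 2) * Phi x +
        Real.exp (x ^ 2 / 2) * ((Real.sqrt (2 * Real.pi))⁻¹ * Real.exp (-x ^ 2 / 2)))
      = x * (Real.sqrt (2 * Real.pi) * (1 - β ^ 2) * Real.exp (x ^ 2 / 2) * Phi x) +
        (Real.sqrt (2 * Real.pi) * (Real.sqrt (2 * Real.pi))⁻¹) *
          ((Real.exp (x ^ 2 / 2) * Real.exp (-x ^ 2 / 2)) * (1 - β ^ 2)) by ring, h1, hexp]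
    ring
  rw [heq] at h
  exact h.congr_of_eventuallyEq (Filter.Eventually.of_forall fun y => by rw [gfun]; simp only [Pi.mul_apply]; ring)

lemma gfun_pos {β : ℝ} (hβ1 : β ^ 2 < 1) (x : ℝ) : 0 < gfun β x := by
  rw [gfun]
  have h1 : (0:ℝ) < Real.sqrt (2 * Real.pi) := by positivity
  have h2 : (0:ℝ) < 1 - β ^ 2 := by linarith
  exact mul_pos (mul_pos (mul_pos h1 h2) (Real.exp_pos _)) (Phi_pos x)

lemma key_ineq {β : ℝ} (hβ : 0 < β) (hβ1 : β ^ 2 < 1) (hroot : gfun β β = β)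
    {x : ℝ} (hx : x ≤ β) : x ≤ gfun β x := by
  have hgc : Continuous (gfun β) := by
    have : Differentiable ℝ (gfun β) := fun y => (hasDerivAt_gfun β y).differentiableAt
    exact this.continuous
  have hmono : MonotoneOn (gfun β) (Icc 0 β) := by
    apply monotoneOn_of_deriv_nonneg (convex_Icc 0 β) hgc.continuousOn
      (fun y _ => (hasDerivAt_gfun β y).differentiableAt.differentiableWithinAt)
    intro y hy
    rw [interior_Icc] at hy
    rw [(hasDerivAt_gfun β y).deriv]
    have := gfun_pos hβ1 y
    nlinarith [hy.1]
  set h : ℝ → ℝ := fun y => gfun β y - y with hh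
  have hhd : ∀ y, HasDerivAt h (y * gfun β y - β ^ 2) y := by
    intro y
    have := (hasDerivAt_gfun β y).sub (hasDerivAt_id y)
    exact this.congr_deriv (by ring)
  have hanti : AntitoneOn h (Iic β) := by
    apply antitoneOn_of_deriv_nonpos (convex_Iic β)
      (Continuous.continuousOn (by exact (hgc.sub continuous_id)))
      (fun y _ => (hhd y).differentiableAt.differentiableWithinAt)
    intro y hy
    rw [interior_Iic] at hy
    rw [(hhd y).deriv]
    rcases le_or_gt y 0 with h0 | h0
    · have := gfun_pos hβ1 y
      nlinarith
    · have hgy : gfun β y ≤ gfun β β := hmono ⟨h0.le, hy.le⟩ ⟨hβ.le, le_rfl⟩ hy.le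
      rw [hroot] at hgy
      have hyβ : y < β := hy
      nlinarith [mul_nonneg h0.le (sub_nonneg.2 hgy), mul_nonneg (sub_nonneg.2 hyβ.le) hβ.le]
  have : h β ≤ h x := hanti (mem_Iic.2 hx) (mem_Iic.2 le_rfl) hx
  simp only [hh, hroot, sub_self] at this
  linarith

theorem stmt2 (β r t : ℝ) (hβ : 0 < β)
    (hroot : Real.sqrt (2 * Real.pi) * (1 - β ^ 2) * Real.exp (β ^ 2 / 2) * Phi β = β)
    (ht : t ∈ Set.Ico (0 : ℝ) 1) :
    Continuous (fun z => vr β r t z) ∧ ∀ z : ℝ, z ≤ vr β r t z := by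
  obtain ⟨ht0, ht1⟩ := ht
  set s := Real.sqrt (1 - t) with hs_def
  have hs : 0 < s := Real.sqrt_pos.2 (by linarith)
  have hs2 : s ^ 2 = 1 - t := Real.sq_sqrt (by linarith)
  have hβ1 : β ^ 2 < 1 := by
    by_contra hc
    push_neg at hc
    have hsp : (0:ℝ) < Real.sqrt (2 * Real.pi) := by positivity
    nlinarith [Phi_pos β, Real.exp_pos (β ^ 2 / 2),
      mul_pos (mul_pos hsp (Real.exp_pos (β ^ 2 / 2))) (Phi_pos β)]
  have hgroot : gfun β β = β := by rw [gfun]; exact hroot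
  have hgd : Differentiable ℝ (gfun β) := fun y => (hasDerivAt_gfun β y).differentiableAt
  have hgc : Continuous (gfun β) := hgd.continuous
  have hexp2 : ∀ z : ℝ, (z - r) ^ 2 / (2 * (1 - t)) = ((z - r) / s) ^ 2 / 2 := by
    intro z
    rw [div_pow, hs2, div_div]
    ring_nf
  have hsqrt : Real.sqrt (2 * Real.pi * (1 - t)) = Real.sqrt (2 * Real.pi) * s :=
    Real.sqrt_mul (by positivity) _
  have hvr : (fun z => vr β r t z) = fun z =>
      if z < r + β * s then r + s * gfun β ((z - r) / s) else z := by
    funext z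
    rw [vr, gfun, ← hs_def]
    by_cases hz : z < r + β * s
    · rw [if_pos hz, if_pos hz, hsqrt, hexp2 z]
      ring
    · rw [if_neg hz, if_neg hz]
  constructor
  · rw [hvr]
    have heq : (fun z => if z < r + β * s then r + s * gfun β ((z - r) / s) else z)
        = fun z => if r + β * s ≤ z then z else r + s * gfun β ((z - r) / s) := by
      funext z
      rcases lt_or_ge z (r + β * s) with h | h
      · rw [if_pos h, if_neg (not_le.2 h)]
      · rw [if_neg (not_lt.2 h), if_pos h]
    rw [heq]
    apply Continuous.if_le continuous_id
      (continuous_const.add (continuous_const.mul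
        (hgc.comp ((continuous_id.sub continuous_const).div_const s))))
      continuous_const continuous_id
    intro z hz
    simp only [id_eq] at hz ⊢
    have hx : (z - r) / s = β := by
      rw [← hz]
      field_simp
      ring
    simp only [Function.comp_apply, Pi.add_apply, Pi.mul_apply, Pi.sub_apply, id_eq, ← hs_def]
    rw [hx, hgroot, ← hz]
    ring
  · intro z
    rw [congrFun hvr z]
    by_cases hz : z < r + β * s
    · rw [if_pos hz]
      have hxβ : (z - r) / s ≤ β := by
        rw [div_le_iff₀ hs]
        nlinarith
      have hkey := key_ineq hβ hβ1 hgroot hxβ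
      have hzeq : z = r + s * ((z - r) / s) := by
        field_simp
        ring
      nlinarith [mul_le_mul_of_nonneg_left hkey hs.le]
    · rw [if_neg hz]
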